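/- For real numbers u and h with 1 + u > 0 and 1 + h > 0, the inequality (u − h)·log((1+u)/(1+h)) ≥ (u − h)² / max{1+u, 1+h} holds. -/

import Mathlib

lemma log_ratio_aux (a b : ℝ) (ha : 0 < a) (hb : 0 < b) (hba : b ≤ a) :
    (a - b) * Real.log (a / b) ≥ (a - b) ^ 2 / a := by
  have hlog : Real.log (b / a) ≤ b / a - 1 :=
    Real.log_le_sub_one_of_pos (div_pos hb ha)
  have hlog2 : (a - b) / a ≤ Real.log (a / b) := by
    have : Real.log (a / b) = - Real.log (b / a) := by
      rw [← Real.log_inv, inv_div]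
    rw [this]
    have : (a - b) / a = -(b / a - 1) := by field_simp; ring
    rw [this]
    linarith
  have hab : 0 ≤ a - b := by linarith
  calc (a - b) ^ 2 / a = (a - b) * ((a - b) / a) := by ring
    _ ≤ (a - b) * Real.log (a / b) := by
        exact mul_le_mul_of_nonneg_left hlog2 hab

theorem log_ratio_quadratic_bound (u h : ℝ) (hu : 0 < 1 + u) (hh : 0 < 1 + h) :
    (u - h) * Real.log ((1 + u) / (1 + h)) ≥ (u - h) ^ 2 / max (1 + u) (1 + h) := by
  rcases le_total (1 + h) (1 + u) with hle | hle
  · rw [max_eq_left hle]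
    have := log_ratio_aux (1 + u) (1 + h) hu hh hle
    have e : (1 + u) - (1 + h) = u - h := by ring
    rwa [e] at this
  · rw [max_eq_right hle]
    have := log_ratio_aux (1 + h) (1 + u) hh hu hle
    have e : (1 + h) - (1 + u) = -(u - h) := by ring
    rw [e] at this
    have elog : Real.log ((1 + h) / (1 + u)) = - Real.log ((1 + u) / (1 + h)) := by
      rw [← Real.log_inv, inv_div]
    rw [elog] at this
    rw [neg_mul_neg, neg_sq] at this
    exact this
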